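/- Characterization of the cubic-regularized step size: let E be a finite-dimensional real inner product space, H : E → E a symmetric positive semidefinite linear map, g ∈ E with g ≠ 0, η ≥ 0 and L > 0. Consider the function φ(α) := −½⟨(H + (α + η)I)⁻¹ g, g⟩ − 2α³/(3L²) for α > 0 (note H + (α + η)I is positive definite, hence invertible, for every α > 0). Then φ attains a unique global maximum over (0, ∞) at a point α* > 0, and α* is characterized by the fixed-point equation α* = (L/2)·‖(H + (α* + η)I)⁻¹ g‖. -/

import Mathlib

set_option linter.unusedSectionVars false
set_option linter.unusedVariables false
set_option maxHeartbeats 1000000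
set_option synthInstance.maxHeartbeats 400000

open scoped RealInnerProductSpace
open Real Set

section Aux

variable {E : Type*} [NormedAddCommGroup E] [InnerProductSpace ℝ E] [FiniteDimensional ℝ E]

lemma aux_coercive (T : E →L[ℝ] E) (hpsd : ∀ u, 0 ≤ ⟪T u, u⟫) {c : ℝ} (hc : 0 < c) (u : E) :
    c * ‖u‖ ^ 2 ≤ ⟪(T + c • (1 : E →L[ℝ] E)) u, u⟫ := by
  have h : ⟪(T + c • (1 : E →L[ℝ] E)) u, u⟫ = ⟪T u, u⟫ + c * ‖u‖ ^ 2 := by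
    simp [inner_add_left, real_inner_smul_left, real_inner_self_eq_norm_sq]
  rw [h]
  nlinarith [hpsd u]

lemma aux_isUnit (T : E →L[ℝ] E) (hpsd : ∀ u, 0 ≤ ⟪T u, u⟫) {c : ℝ} (hc : 0 < c) :
    IsUnit (T + c • (1 : E →L[ℝ] E)) := by
  set f := T + c • (1 : E →L[ℝ] E) with hf
  have hinj : Function.Injective f := by
    intro u v huv
    have h0 : f (u - v) = 0 := by rw [map_sub, huv, sub_self]
    have hco := aux_coercive T hpsd hc (u - v)
    rw [← hf, h0] at hco
    simp only [inner_zero_left] at hco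
    have huv0 : u - v = 0 := by
      by_contra h
      have hpos : 0 < ‖u - v‖ := norm_pos_iff.mpr h
      nlinarith [mul_pos hc (mul_pos hpos hpos)]
    exact sub_eq_zero.mp huv0
  let e := (LinearEquiv.ofInjectiveEndo (f : E →ₗ[ℝ] E) hinj).toContinuousLinearEquiv
  refine ⟨e.toUnit, ?_⟩
  ext v
  rfl

lemma aux_cancel₁ {f : E →L[ℝ] E} (hu : IsUnit f) (v : E) : f (Ring.inverse f v) = v := by
  have h := Ring.mul_inverse_cancel f hu
  calc f (Ring.inverse f v) = (f * Ring.inverse f) v := (ContinuousLinearMap.mul_apply _ _ _).symm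
    _ = v := by rw [h]; rfl

lemma aux_cancel₂ {f : E →L[ℝ] E} (hu : IsUnit f) (v : E) : Ring.inverse f (f v) = v := by
  have h := Ring.inverse_mul_cancel f hu
  calc Ring.inverse f (f v) = (Ring.inverse f * f) v := (ContinuousLinearMap.mul_apply _ _ _).symm
    _ = v := by rw [h]; rfl

lemma aux_inv_symm {f : E →L[ℝ] E} (hu : IsUnit f)
    (hsymf : ∀ u v, ⟪f u, v⟫ = ⟪u, f v⟫) (u v : E) :
    ⟪Ring.inverse f u, v⟫ = ⟪u, Ring.inverse f v⟫ := by
  have h1 : (⟪Ring.inverse f u, v⟫ : ℝ) = ⟪Ring.inverse f u, f (Ring.inverse f v)⟫ := by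
    rw [aux_cancel₁ hu v]
  rw [h1, ← hsymf, aux_cancel₁ hu u]

lemma aux_inv_pos {f : E →L[ℝ] E} (hu : IsUnit f) {c : ℝ} (hc : 0 < c)
    (hcoer : ∀ u, c * ‖u‖ ^ 2 ≤ ⟪f u, u⟫) {v : E} (hv : v ≠ 0) :
    0 < ⟪Ring.inverse f v, v⟫ := by
  set w := Ring.inverse f v with hw
  have hfw : f w = v := aux_cancel₁ hu v
  have hw0 : w ≠ 0 := by
    intro h
    apply hv
    rw [← hfw, h, map_zero]
  have hwn : 0 < ‖w‖ := norm_pos_iff.mpr hw0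
  have : (⟪w, v⟫ : ℝ) = ⟪f w, w⟫ := by rw [← hfw, real_inner_comm]
  calc (0 : ℝ) < c * ‖w‖ ^ 2 := by positivity
    _ ≤ ⟪f w, w⟫ := hcoer w
    _ = ⟪w, v⟫ := this.symm
    _ = ⟪Ring.inverse f v, v⟫ := rfl

lemma aux_norm_le {f : E →L[ℝ] E} (hu : IsUnit f) {c : ℝ} (hc : 0 < c)
    (hcoer : ∀ u, c * ‖u‖ ^ 2 ≤ ⟪f u, u⟫) (v : E) :
    c * ‖Ring.inverse f v‖ ≤ ‖v‖ := by
  set w := Ring.inverse f v with hw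
  have hfw : f w = v := aux_cancel₁ hu v
  by_cases h0 : w = 0
  · simp [h0, norm_nonneg]
  · have hwn : 0 < ‖w‖ := norm_pos_iff.mpr h0
    have h1 : c * ‖w‖ ^ 2 ≤ ⟪f w, w⟫ := hcoer w
    have h2 : (⟪f w, w⟫ : ℝ) ≤ ‖f w‖ * ‖w‖ := real_inner_le_norm _ _
    rw [hfw] at h1 h2
    nlinarith

lemma aux_norm_ge {f : E →L[ℝ] E} (hu : IsUnit f) (v : E) :
    ‖v‖ ≤ ‖f‖ * ‖Ring.inverse f v‖ := by
  calc ‖v‖ = ‖f (Ring.inverse f v)‖ := by rw [aux_cancel₁ hu v]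
    _ ≤ ‖f‖ * ‖Ring.inverse f v‖ := f.le_opNorm _

lemma aux_strict_dec (T : E →L[ℝ] E)
    (hsym : ∀ u v, ⟪T u, v⟫ = ⟪u, T v⟫) (hpsd : ∀ u, 0 ≤ ⟪T u, u⟫)
    {s t : ℝ} (hs : 0 < s) (hst : s < t) {g : E} (hg : g ≠ 0) :
    ‖Ring.inverse (T + t • (1 : E →L[ℝ] E)) g‖ <
      ‖Ring.inverse (T + s • (1 : E →L[ℝ] E)) g‖ := by
  have ht : 0 < t := hs.trans hst
  have hus := aux_isUnit T hpsd hs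
  have hut := aux_isUnit T hpsd ht
  set Bs := Ring.inverse (T + s • (1 : E →L[ℝ] E)) with hBs
  set Bt := Ring.inverse (T + t • (1 : E →L[ℝ] E)) with hBt
  set u := Bt g with hu
  have hu0 : u ≠ 0 := by
    intro h
    apply hg
    have h2 := aux_cancel₁ hut g
    rw [← hBt, ← hu, h, map_zero] at h2
    exact h2.symm
  have hgu : (T + t • (1 : E →L[ℝ] E)) u = g := aux_cancel₁ hut g
  have hsplit : g = (T + s • (1 : E →L[ℝ] E)) u + (t - s) • u := by
    rw [← hgu]
    simp only [ContinuousLinearMap.add_apply, ContinuousLinearMap.smul_apply,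
      ContinuousLinearMap.one_apply]
    module
  have hBsg : Bs g = u + (t - s) • Bs u := by
    conv_lhs => rw [hsplit]
    rw [map_add, map_smul]
    congr 1
    exact aux_cancel₂ hus u
  have hpos : 0 < ⟪Bs u, u⟫ := aux_inv_pos hus hs (aux_coercive T hpsd hs) hu0
  have hnorm : ‖Bs g‖ ^ 2 = ‖u‖ ^ 2 + 2 * ⟪u, (t - s) • Bs u⟫ + ‖(t - s) • Bs u‖ ^ 2 := by
    rw [hBsg]; exact norm_add_sq_real u _
  have hinner : (⟪u, (t - s) • Bs u⟫ : ℝ) = (t - s) * ⟪Bs u, u⟫ := by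
    rw [real_inner_smul_right, real_inner_comm]
  have h2 : ‖u‖ ^ 2 < ‖Bs g‖ ^ 2 := by
    rw [hnorm, hinner]
    nlinarith [sq_nonneg ‖(t - s) • Bs u‖]
  nlinarith [norm_nonneg (Bs g), norm_nonneg u]

lemma aux_inv_hasDerivAt (T : E →L[ℝ] E) (hpsd : ∀ u, 0 ≤ ⟪T u, u⟫) {c : ℝ} (hc : 0 < c) :
    HasDerivAt (fun x : ℝ => Ring.inverse (T + x • (1 : E →L[ℝ] E)))
      (-(Ring.inverse (T + c • (1 : E →L[ℝ] E)) * Ring.inverse (T + c • (1 : E →L[ℝ] E)))) c := by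
  have hu := aux_isUnit T hpsd hc
  set A := T + c • (1 : E →L[ℝ] E) with hA
  set B := Ring.inverse A with hB
  have hBu : (↑hu.unit⁻¹ : E →L[ℝ] E) = B := by rw [← Ring.inverse_unit hu.unit, hu.unit_spec]
  have hAder : HasDerivAt (fun x : ℝ => T + x • (1 : E →L[ℝ] E)) (1 : E →L[ℝ] E) c := by
    simpa using ((hasDerivAt_id c).smul_const (1 : E →L[ℝ] E)).const_add T
  have hinv : HasFDerivAt Ring.inverse
      (-(ContinuousLinearMap.mulLeftRight ℝ (E →L[ℝ] E) B) B) A := by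
    have h := hasFDerivAt_ringInverse (𝕜 := ℝ) hu.unit
    rwa [hBu, hu.unit_spec] at h
  have h := hinv.comp_hasDerivAt c hAder
  have hval : (-(ContinuousLinearMap.mulLeftRight ℝ (E →L[ℝ] E) B) B) (1 : E →L[ℝ] E)
      = -(B * B) := by
    simp [ContinuousLinearMap.mulLeftRight_apply]
  rw [← hval]
  exact h

lemma aux_inner_hasDerivAt (T : E →L[ℝ] E)
    (hsym : ∀ u v, ⟪T u, v⟫ = ⟪u, T v⟫) (hpsd : ∀ u, 0 ≤ ⟪T u, u⟫)
    (g : E) {c : ℝ} (hc : 0 < c) :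
    HasDerivAt (fun x : ℝ => (⟪Ring.inverse (T + x • (1 : E →L[ℝ] E)) g, g⟫ : ℝ))
      (-‖Ring.inverse (T + c • (1 : E →L[ℝ] E)) g‖ ^ 2) c := by
  have hu := aux_isUnit T hpsd hc
  set A := T + c • (1 : E →L[ℝ] E) with hA
  set B := Ring.inverse A with hB
  have hAsym : ∀ u v, ⟪A u, v⟫ = ⟪u, A v⟫ := by
    intro u v
    simp only [hA, ContinuousLinearMap.add_apply, ContinuousLinearMap.smul_apply,
      ContinuousLinearMap.one_apply, inner_add_left, inner_add_right,
      real_inner_smul_left, real_inner_smul_right, hsym u v]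
  have hBsym := aux_inv_symm hu hAsym
  set Φ : (E →L[ℝ] E) →L[ℝ] ℝ := (innerSL ℝ g).comp ((ContinuousLinearMap.apply ℝ E) g) with hΦ
  have hcomp := aux_inv_hasDerivAt T hpsd hc
  have hfinal := Φ.hasFDerivAt.comp_hasDerivAt c hcomp
  have hfun : (fun x : ℝ => (⟪Ring.inverse (T + x • (1 : E →L[ℝ] E)) g, g⟫ : ℝ)) =
      Φ ∘ (fun x : ℝ => Ring.inverse (T + x • (1 : E →L[ℝ] E))) := by
    funext x
    simp only [Φ, Function.comp_apply, ContinuousLinearMap.comp_apply,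
      ContinuousLinearMap.apply_apply, innerSL_apply_apply]
    exact real_inner_comm _ _
  have hval : Φ (-(B * B)) = -‖B g‖ ^ 2 := by
    simp only [Φ, ContinuousLinearMap.comp_apply, ContinuousLinearMap.apply_apply,
      innerSL_apply_apply, ContinuousLinearMap.neg_apply, ContinuousLinearMap.mul_apply,
      inner_neg_right]
    rw [← hBsym g (B g), real_inner_self_eq_norm_sq]
  rw [hfun, ← hval]
  exact hfinal

end Aux

/-- Characterization of the cubic-regularized step size: for a symmetric PSD map `H`,
`g ≠ 0`, `η ≥ 0`, `L > 0`, the map `H + (α + η)I` is invertible for every `α > 0`, the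
function `φ(α) = −½⟨(H + (α + η)I)⁻¹g, g⟩ − 2α³/(3L²)` attains a unique global maximum
over `(0, ∞)` at some `α* > 0`, and `α* = (L/2)‖(H + (α* + η)I)⁻¹g‖`. -/
theorem cubic_step_size_characterization
    {E : Type*} [NormedAddCommGroup E] [InnerProductSpace ℝ E] [FiniteDimensional ℝ E]
    (H : E →L[ℝ] E)
    (hsym : ∀ u v, ⟪H u, v⟫ = ⟪u, H v⟫) (hpsd : ∀ u, 0 ≤ ⟪H u, u⟫)
    (g : E) (hg : g ≠ 0) (η : ℝ) (hη : 0 ≤ η) (L : ℝ) (hL : 0 < L)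
    (φ : ℝ → ℝ)
    (hφ : ∀ α : ℝ, φ α =
      -(1 / 2) * ⟪Ring.inverse (H + (α + η) • (1 : E →L[ℝ] E)) g, g⟫
        - 2 * α ^ 3 / (3 * L ^ 2)) :
    (∀ α : ℝ, 0 < α → IsUnit (H + (α + η) • (1 : E →L[ℝ] E))) ∧
    ∃ αs : ℝ, 0 < αs ∧ (∀ α : ℝ, 0 < α → φ α ≤ φ αs) ∧
      (∀ α' : ℝ, 0 < α' → (∀ α : ℝ, 0 < α → φ α ≤ φ α') → α' = αs) ∧
      αs = L / 2 * ‖Ring.inverse (H + (αs + η) • (1 : E →L[ℝ] E)) g‖ := by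
  have hηpos : ∀ α : ℝ, 0 < α → 0 < α + η := fun α hα => by linarith
  have hunit : ∀ α : ℝ, 0 < α → IsUnit (H + (α + η) • (1 : E →L[ℝ] E)) :=
    fun α hα => aux_isUnit H hpsd (hηpos α hα)
  refine ⟨hunit, ?_⟩
  set q : ℝ → ℝ := fun α => L / 2 * ‖Ring.inverse (H + (α + η) • (1 : E →L[ℝ] E)) g‖ with hqdef
  -- q is strictly decreasing on (0, ∞)
  have hqanti : ∀ s t : ℝ, 0 < s → s < t → q t < q s := by
    intro s t hs hst
    have := aux_strict_dec H hsym hpsd (hηpos s hs) (by linarith : s + η < t + η) hg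
    have hL2 : (0 : ℝ) < L / 2 := by linarith
    exact mul_lt_mul_of_pos_left this hL2
  -- q continuous at every positive point
  have hqcont : ∀ α : ℝ, 0 < α → ContinuousAt q α := by
    intro α hα
    have h1 : ContinuousAt (fun x : ℝ => Ring.inverse (H + (x + η) • (1 : E →L[ℝ] E))) α := by
      have h2 := (aux_inv_hasDerivAt H hpsd (hηpos α hα)).continuousAt
      have h3 : ContinuousAt (fun x : ℝ => x + η) α := (continuous_id.add continuous_const).continuousAt
      have h4 := ContinuousAt.comp (x := α) (f := fun x : ℝ => x + η) h2 h3
      exact h4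
    exact (continuous_const.continuousAt.mul
      (((ContinuousLinearMap.apply ℝ E g).continuous.norm).continuousAt.comp h1))
  -- lower bound for q on (0,1]
  have hgn : 0 < ‖g‖ := norm_pos_iff.mpr hg
  have hHn : 0 ≤ ‖H‖ := norm_nonneg H
  set D : ℝ := ‖H‖ + 1 + η with hD
  have hDpos : 0 < D := by positivity
  set c₀ : ℝ := L / 2 * ‖g‖ / D with hc₀
  have hc₀pos : 0 < c₀ := by positivity
  have hlow : ∀ α : ℝ, 0 < α → α ≤ 1 → c₀ ≤ q α := by
    intro α hα hα1
    have hu := hunit α hα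
    have h1 : ‖g‖ ≤ ‖H + (α + η) • (1 : E →L[ℝ] E)‖ *
        ‖Ring.inverse (H + (α + η) • (1 : E →L[ℝ] E)) g‖ := aux_norm_ge hu g
    have hAle : ‖H + (α + η) • (1 : E →L[ℝ] E)‖ ≤ D := by
      have hstep1 : ‖H + (α + η) • (1 : E →L[ℝ] E)‖ ≤ ‖H‖ + ‖(α + η) • (1 : E →L[ℝ] E)‖ :=
        norm_add_le _ _
      have h1le : ‖(1 : E →L[ℝ] E)‖ ≤ 1 := ContinuousLinearMap.norm_id_le
      have hsm : ‖(α + η) • (1 : E →L[ℝ] E)‖ ≤ α + η := by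
        have hle := norm_smul_le (α + η) (1 : E →L[ℝ] E)
        have habs : ‖(α + η : ℝ)‖ = α + η := by
          rw [Real.norm_eq_abs, abs_of_pos (hηpos α hα)]
        rw [habs] at hle
        nlinarith [hηpos α hα]
      rw [hD]; linarith
    set N := ‖Ring.inverse (H + (α + η) • (1 : E →L[ℝ] E)) g‖ with hN
    have hN0 : 0 ≤ N := norm_nonneg _
    have hgD : ‖g‖ ≤ D * N := by nlinarith [ContinuousLinearMap.opNorm_nonneg (H + (α + η) • (1 : E →L[ℝ] E))]
    rw [hqdef]
    have : ‖g‖ / D ≤ N := (div_le_iff₀ hDpos).mpr (by nlinarith [hgD])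
    calc c₀ = L / 2 * (‖g‖ / D) := by rw [hc₀]; ring
      _ ≤ L / 2 * N := by nlinarith
  -- choose endpoints
  set α₀ : ℝ := min 1 (c₀ / 2) with hα₀def
  have hα₀pos : 0 < α₀ := lt_min one_pos (by linarith)
  have hα₀le1 : α₀ ≤ 1 := min_le_left _ _
  have hψ₀ : α₀ < q α₀ := by
    have := hlow α₀ hα₀pos hα₀le1
    have h2 : α₀ ≤ c₀ / 2 := min_le_right _ _
    linarith
  set α₁ : ℝ := max (α₀ + 1) (L / 2 * ‖g‖ + 1) with hα₁def
  have hα₁gt : α₀ < α₁ := lt_of_lt_of_le (by linarith) (le_max_left _ _)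
  have hα₁ge1 : 1 ≤ α₁ := le_trans (by linarith) (le_max_left _ _)
  have hα₁geLg : L / 2 * ‖g‖ + 1 ≤ α₁ := le_max_right _ _
  have hα₁pos : 0 < α₁ := by linarith
  have hψ₁ : q α₁ < α₁ := by
    have hu := hunit α₁ hα₁pos
    have hb := aux_norm_le hu (hηpos α₁ hα₁pos) (aux_coercive H hpsd (hηpos α₁ hα₁pos)) g
    set N := ‖Ring.inverse (H + (α₁ + η) • (1 : E →L[ℝ] E)) g‖ with hN
    have hN0 : 0 ≤ N := norm_nonneg _
    -- (α₁ + η) * N ≤ ‖g‖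
    rw [hqdef]
    have hα₁N : α₁ * N ≤ ‖g‖ := by nlinarith
    nlinarith
  -- fixed point via IVT
  set ψ : ℝ → ℝ := fun α => q α - α with hψdef
  have hψcont : ContinuousOn ψ (Icc α₀ α₁) := by
    intro x hx
    have hxpos : 0 < x := lt_of_lt_of_le hα₀pos hx.1
    exact ((hqcont x hxpos).sub continuous_id.continuousAt).continuousWithinAt
  have hivt := intermediate_value_Icc' (le_of_lt hα₁gt) hψcont
  have h0mem : (0 : ℝ) ∈ Icc (ψ α₁) (ψ α₀) := by
    constructor
    · simp only [hψdef]; linarith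
    · simp only [hψdef]; linarith
  obtain ⟨αs, hαsmem, hαszero⟩ := hivt h0mem
  have hαspos : 0 < αs := lt_of_lt_of_le hα₀pos hαsmem.1
  have hfix : αs = q αs := by
    have : q αs - αs = 0 := hαszero
    linarith
  -- derivative of φ
  have hφfun : φ = fun α : ℝ =>
      -(1 / 2) * ⟪Ring.inverse (H + (α + η) • (1 : E →L[ℝ] E)) g, g⟫
        - 2 * α ^ 3 / (3 * L ^ 2) := funext hφ
  have hder : ∀ β : ℝ, 0 < β → HasDerivAt φ (2 / L ^ 2 * ((q β) ^ 2 - β ^ 2)) β := by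
    intro β hβ
    have h1 := aux_inner_hasDerivAt H hsym hpsd g (hηpos β hβ)
    have hshift : HasDerivAt (fun x : ℝ => x + η) 1 β := (hasDerivAt_id β).add_const η
    have h2 : HasDerivAt (fun x : ℝ =>
        (⟪Ring.inverse (H + (x + η) • (1 : E →L[ℝ] E)) g, g⟫ : ℝ))
        (-‖Ring.inverse (H + (β + η) • (1 : E →L[ℝ] E)) g‖ ^ 2 * 1) β :=
      by have h := HasDerivAt.comp β h1 hshift; exact h
    have h3 : HasDerivAt (fun x : ℝ => x ^ 3) (3 * β ^ 2) β := by
      simpa using hasDerivAt_pow 3 β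
    have h4 : HasDerivAt (fun x : ℝ => 2 * x ^ 3 / (3 * L ^ 2))
        (2 * (3 * β ^ 2) / (3 * L ^ 2)) β := (h3.const_mul 2).div_const _
    have h5 := (h2.const_mul (-(1 / 2))).sub h4
    rw [hφfun]
    convert h5 using 1
    · rfl
    · rfl
    · rfl
    have hLne : L ≠ 0 := ne_of_gt hL
    rw [hqdef]
    field_simp
  -- strict comparison around αs
  have key : ∀ α : ℝ, 0 < α → α ≠ αs → φ α < φ αs := by
    intro α hα hne
    rcases lt_or_gt_of_ne hne with hlt | hgt
    · -- α < αs : φ strictly increasing on [α, αs]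
      have hmono : StrictMonoOn φ (Icc α αs) := by
        apply strictMonoOn_of_deriv_pos (convex_Icc α αs)
        · intro x hx
          have hxpos : 0 < x := lt_of_lt_of_le hα hx.1
          exact (hder x hxpos).continuousAt.continuousWithinAt
        · intro x hx
          rw [interior_Icc] at hx
          have hxpos : 0 < x := lt_trans hα hx.1
          rw [(hder x hxpos).deriv]
          have hq1 : q αs < q x := hqanti x αs hxpos hx.2
          have hlt2 : x < q x := by linarith [hx.1, hx.2, hq1, hfix]
          have hL2 : (0 : ℝ) < 2 / L ^ 2 := by positivity
          have hsq : 0 < q x ^ 2 - x ^ 2 := by nlinarith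
          exact mul_pos hL2 hsq
      exact hmono (left_mem_Icc.mpr hlt.le) (right_mem_Icc.mpr hlt.le) hlt
    · -- αs < α : φ strictly decreasing on [αs, α]
      have hmono : StrictAntiOn φ (Icc αs α) := by
        apply strictAntiOn_of_deriv_neg (convex_Icc αs α)
        · intro x hx
          have hxpos : 0 < x := lt_of_lt_of_le hαspos hx.1
          exact (hder x hxpos).continuousAt.continuousWithinAt
        · intro x hx
          rw [interior_Icc] at hx
          have hxpos : 0 < x := lt_trans hαspos hx.1
          rw [(hder x hxpos).deriv]
          have hq1 : q x < q αs := hqanti αs x hαspos hx.1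
          have hlt2 : q x < x := by linarith [hx.1, hx.2, hq1, hfix]
          have hqx0 : 0 ≤ q x := by
            rw [hqdef]; positivity
          have hL2 : (0 : ℝ) < 2 / L ^ 2 := by positivity
          have hsq : q x ^ 2 - x ^ 2 < 0 := by nlinarith
          exact mul_neg_of_pos_of_neg hL2 hsq
      exact hmono (left_mem_Icc.mpr hgt.le) (right_mem_Icc.mpr hgt.le) hgt
  refine ⟨αs, hαspos, ?_, ?_, hfix⟩
  · intro α hα
    rcases eq_or_ne α αs with h | h
    · rw [h]
    · exact (key α hα h).le
  · intro α' hα' hmax'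
    by_contra hne
    have h1 := key α' hα' hne
    have h2 := hmax' αs hαspos
    linarith
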